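/- (Elliptical potential lemma, bounded-potential case) Let d ≥ 1, T ≥ 1, let x_1, …, x_T ∈ ℝ^d with ‖x_t‖₂ ≤ 1 for all t, and let λ > 0. If x_tᵀ V_{t-1}(λ)⁻¹ x_t ≤ 1 for every t ∈ [T], then Σ_{t=1}^T x_tᵀ V_{t-1}(λ)⁻¹ x_t ≤ 2 d · log( 1 + T/(d·λ) ). -/

import Mathlib

open Matrix

lemma aux_det_one_add {d : ℕ} (u v : Fin d → ℝ) :
    (1 + Matrix.replicateCol Unit u * Matrix.replicateRow Unit v).det = 1 + v ⬝ᵥ u := by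
  have h1 := Matrix.det_fromBlocks_one₂₂ (1 : Matrix Unit Unit ℝ)
    (Matrix.replicateRow Unit v) (-(Matrix.replicateCol Unit u))
  have h2 := Matrix.det_fromBlocks_one₁₁
    (Matrix.replicateRow Unit v) (-(Matrix.replicateCol Unit u)) (1 : Matrix (Fin d) (Fin d) ℝ)
  rw [h2] at h1
  simp only [Matrix.neg_mul, Matrix.mul_neg, sub_neg_eq_add] at h1
  rw [h1, det_unique]
  simp [Matrix.add_apply, Matrix.one_apply, Matrix.replicateRow_mul_replicateCol_apply]

lemma vecMulVec_mulVec' {d : ℕ} (u v y : Fin d → ℝ) :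
    Matrix.vecMulVec u v *ᵥ y = (v ⬝ᵥ y) • u := by
  ext i
  simp [Matrix.mulVec, Matrix.vecMulVec_apply, dotProduct, Finset.mul_sum, mul_assoc, mul_comm,
    mul_left_comm]

lemma aux_det_add_vecMulVec {d : ℕ} (A : Matrix (Fin d) (Fin d) ℝ) (hA : IsUnit A.det)
    (u v : Fin d → ℝ) :
    (A + Matrix.vecMulVec u v).det = A.det * (1 + v ⬝ᵥ (A⁻¹ *ᵥ u)) := by
  have key : A + Matrix.vecMulVec u v
      = A * (1 + Matrix.replicateCol Unit (A⁻¹ *ᵥ u) * Matrix.replicateRow Unit v) := by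
    rw [Matrix.mul_add, Matrix.mul_one, Matrix.replicateCol_mulVec, ← Matrix.mul_assoc, ← Matrix.mul_assoc,
      Matrix.mul_nonsing_inv _ hA, Matrix.one_mul, Matrix.vecMulVec_eq Unit]
  rw [key, det_mul, aux_det_one_add]

lemma aux_trace_eq_sum_eigenvalues {d : ℕ} {A : Matrix (Fin d) (Fin d) ℝ}
    (hA : A.IsHermitian) : A.trace = ∑ i, hA.eigenvalues i := by
  simpa using hA.trace_eq_sum_eigenvalues

lemma aux_le_two_log {u : ℝ} (h0 : 0 ≤ u) (h1 : u ≤ 1) : u ≤ 2 * Real.log (1 + u) := by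
  have hpos : (0:ℝ) < 1 + u := by linarith
  have h2 : Real.log (1 + u)⁻¹ ≤ (1 + u)⁻¹ - 1 := Real.log_le_sub_one_of_pos (by positivity)
  rw [Real.log_inv] at h2
  have hmul : (1 + u) * (1 + u)⁻¹ = 1 := mul_inv_cancel₀ (ne_of_gt hpos)
  nlinarith [h2, hmul, sq_nonneg u]

/-- Elliptical potential lemma, bounded-potential case. -/
theorem elliptical_potential_sum (d T : ℕ) (hd : 1 ≤ d) (hT : 1 ≤ T)
    (x : ℕ → Fin d → ℝ)
    (hx : ∀ t ∈ Finset.Icc 1 T, Real.sqrt (∑ i, (x t i) ^ 2) ≤ 1)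
    (lam : ℝ) (hlam : 0 < lam)
    (V : ℕ → Matrix (Fin d) (Fin d) ℝ)
    (hV : ∀ k, V k = lam • (1 : Matrix (Fin d) (Fin d) ℝ)
        + ∑ s ∈ Finset.Icc 1 k, Matrix.vecMulVec (x s) (x s))
    (hbound : ∀ t ∈ Finset.Icc 1 T, x t ⬝ᵥ (V (t - 1))⁻¹ *ᵥ x t ≤ 1) :
    ∑ t ∈ Finset.Icc 1 T, x t ⬝ᵥ (V (t - 1))⁻¹ *ᵥ x t
      ≤ 2 * d * Real.log (1 + T / (d * lam)) := by
  set u : ℕ → ℝ := fun t => x t ⬝ᵥ (V (t - 1))⁻¹ *ᵥ x t with hu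
  -- positive definiteness of each V k
  have hVpos : ∀ k, (V k).PosDef := by
    intro k
    refine Matrix.PosDef.of_dotProduct_mulVec_pos ?_ ?_
    · rw [hV]
      ext i j
      simp [Matrix.conjTranspose_apply, Matrix.add_apply, Matrix.one_apply, Matrix.sum_apply,
        Matrix.vecMulVec_apply, eq_comm, mul_comm]
    · intro y hy
      rw [hV]
      have hstar : star y = y := by simp
      rw [hstar, Matrix.add_mulVec, dotProduct_add, Matrix.smul_mulVec,
        Matrix.one_mulVec, dotProduct_smul]
      have h1 : 0 < lam * (y ⬝ᵥ y) := by
        apply mul_pos hlam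
        have : y ⬝ᵥ y ≠ 0 := fun h => hy (dotProduct_self_eq_zero.mp h)
        have h2 : 0 ≤ y ⬝ᵥ y := by
          simp only [dotProduct]
          exact Finset.sum_nonneg fun i _ => mul_self_nonneg _
        exact lt_of_le_of_ne h2 (Ne.symm this)
      have h2 : 0 ≤ y ⬝ᵥ ((∑ s ∈ Finset.Icc 1 k, Matrix.vecMulVec (x s) (x s)) *ᵥ y) := by
        have hsm : (∑ s ∈ Finset.Icc 1 k, Matrix.vecMulVec (x s) (x s)) *ᵥ y
            = ∑ s ∈ Finset.Icc 1 k, (Matrix.vecMulVec (x s) (x s) *ᵥ y) := by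
          ext i
          simp only [Matrix.mulVec, dotProduct, Matrix.sum_apply, Finset.sum_apply,
            Finset.sum_mul]
          exact Finset.sum_comm
        rw [hsm]
        have hds : y ⬝ᵥ ∑ s ∈ Finset.Icc 1 k, (Matrix.vecMulVec (x s) (x s) *ᵥ y)
            = ∑ s ∈ Finset.Icc 1 k, y ⬝ᵥ (Matrix.vecMulVec (x s) (x s) *ᵥ y) := by
          simp only [dotProduct, Finset.sum_apply, Finset.mul_sum]
          exact Finset.sum_comm
        rw [hds]
        apply Finset.sum_nonneg
        intro s _
        rw [vecMulVec_mulVec', dotProduct_smul, dotProduct_comm]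
        exact mul_self_nonneg _
      simp only [smul_eq_mul]
      linarith
  -- nonnegativity of u t
  have hupos : ∀ t, 0 ≤ u t := by
    intro t
    have h := ((hVpos (t - 1)).inv).posSemidef.dotProduct_mulVec_nonneg (x t)
    simpa using h
  -- determinant product formula
  have hdet : ∀ n, (V n).det = lam ^ d * ∏ t ∈ Finset.Icc 1 n, (1 + u t) := by
    intro n
    induction n with
    | zero =>
      rw [hV]
      simp [Matrix.det_smul]
    | succ n ih =>
      have hstep : V (n + 1) = V n + Matrix.vecMulVec (x (n + 1)) (x (n + 1)) := by
        rw [hV, hV, Finset.sum_Icc_succ_top (by omega), ← add_assoc]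
      have hunit : IsUnit (V n).det := isUnit_iff_ne_zero.mpr (ne_of_gt (hVpos n).det_pos)
      rw [hstep, aux_det_add_vecMulVec _ hunit, ih,
        Finset.prod_Icc_succ_top (by omega : 1 ≤ n + 1)]
      have : u (n + 1) = x (n + 1) ⬝ᵥ (V n)⁻¹ *ᵥ x (n + 1) := by
        simp [hu]
      rw [this]
      ring
  -- each factor 1 + u t is positive
  have hfacpos : ∀ t, (0:ℝ) < 1 + u t := fun t => by have := hupos t; linarith
  -- log of determinant
  have hlogdet : Real.log ((V T).det)
      = d * Real.log lam + ∑ t ∈ Finset.Icc 1 T, Real.log (1 + u t) := by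
    rw [hdet T, Real.log_mul (by positivity)
        (ne_of_gt (Finset.prod_pos fun t _ => hfacpos t)),
      Real.log_pow, Real.log_prod (fun t _ => ne_of_gt (hfacpos t))]
  -- trace bound
  have htrace : (V T).trace ≤ d * lam + T := by
    rw [hV]
    rw [Matrix.trace_add, Matrix.trace_smul, Matrix.trace_one, Matrix.trace_sum]
    have h1 : ∀ s ∈ Finset.Icc 1 T, (Matrix.vecMulVec (x s) (x s)).trace ≤ 1 := by
      intro s hs
      have hxs := hx s hs
      have hsum : (0:ℝ) ≤ ∑ i, (x s i) ^ 2 := Finset.sum_nonneg fun i _ => sq_nonneg _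
      have : ∑ i, (x s i) ^ 2 ≤ 1 := by
        nlinarith [Real.sq_sqrt hsum, Real.sqrt_nonneg (∑ i, (x s i) ^ 2)]
      calc (Matrix.vecMulVec (x s) (x s)).trace = ∑ i, (x s i) ^ 2 := by
            simp [Matrix.trace, Matrix.diag, Matrix.vecMulVec_apply, sq]
        _ ≤ 1 := this
    have h2 : ∑ s ∈ Finset.Icc 1 T, (Matrix.vecMulVec (x s) (x s)).trace
        ≤ (T : ℝ) := by
      calc ∑ s ∈ Finset.Icc 1 T, (Matrix.vecMulVec (x s) (x s)).trace
          ≤ ∑ s ∈ Finset.Icc 1 T, (1:ℝ) := Finset.sum_le_sum h1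
        _ = (T : ℝ) := by simp [Nat.card_Icc]
    simp only [smul_eq_mul, Fintype.card_fin]
    have : lam * (d : ℝ) = d * lam := mul_comm _ _
    linarith [h2]
  -- AM-GM: det ≤ (trace / d)^d
  have hdpos : (0:ℝ) < d := by exact_mod_cast hd
  have hherm := (hVpos T).1
  have hdetle : (V T).det ≤ (lam + T / d) ^ d := by
    set μ := hherm.eigenvalues with hμ
    have hμpos : ∀ i, 0 < μ i := fun i => (hVpos T).eigenvalues_pos i
    have hdeteq : (V T).det = ∏ i, μ i := by
      have := hherm.det_eq_prod_eigenvalues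
      simpa using this
    have hamgm : ∏ i, (μ i) ^ ((d:ℝ)⁻¹) ≤ ∑ i, (d:ℝ)⁻¹ * μ i := by
      apply Real.geom_mean_le_arith_mean_weighted
      · intro i _; positivity
      · simp [Finset.card_fin]
        field_simp
      · intro i _; exact (hμpos i).le
    have hsum : ∑ i, (d:ℝ)⁻¹ * μ i = (V T).trace / d := by
      rw [aux_trace_eq_sum_eigenvalues hherm, ← Finset.mul_sum]
      ring
    have htr : (V T).trace / d ≤ lam + T / d := by
      rw [div_le_iff₀ hdpos]
      have : (lam + T / d) * d = d * lam + T := by field_simp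
      rw [this]; exact htrace
    have hpow : ((V T).det) = (∏ i, (μ i) ^ ((d:ℝ)⁻¹)) ^ d := by
      rw [← Finset.prod_pow]
      rw [hdeteq]
      congr 1
      ext i
      rw [← Real.rpow_natCast ((μ i) ^ ((d:ℝ)⁻¹)) d, ← Real.rpow_mul (hμpos i).le]
      rw [inv_mul_cancel₀ (ne_of_gt hdpos), Real.rpow_one]
    rw [hpow]
    calc (∏ i, (μ i) ^ ((d:ℝ)⁻¹)) ^ d ≤ ((V T).trace / d) ^ d := by
          apply pow_le_pow_left₀ (Finset.prod_nonneg fun i _ => Real.rpow_nonneg (hμpos i).le _)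
          calc ∏ i, (μ i) ^ ((d:ℝ)⁻¹) ≤ ∑ i, (d:ℝ)⁻¹ * μ i := hamgm
            _ = (V T).trace / d := hsum
      _ ≤ (lam + T / d) ^ d := by
          apply pow_le_pow_left₀ _ htr
          rw [← hsum]
          exact Finset.sum_nonneg fun i _ => mul_nonneg (by positivity) (hμpos i).le
  -- combine
  have hlogle : Real.log ((V T).det) ≤ d * Real.log (lam + T / d) := by
    calc Real.log ((V T).det) ≤ Real.log ((lam + T / d) ^ d) :=
          Real.log_le_log (hVpos T).det_pos hdetle
      _ = d * Real.log (lam + T / d) := by rw [Real.log_pow]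
  have hsumlog : ∑ t ∈ Finset.Icc 1 T, Real.log (1 + u t)
      ≤ d * (Real.log (lam + T / d) - Real.log lam) := by
    have := hlogdet
    nlinarith [hlogle]
  have hfinal : ∑ t ∈ Finset.Icc 1 T, u t
      ≤ 2 * ∑ t ∈ Finset.Icc 1 T, Real.log (1 + u t) := by
    rw [Finset.mul_sum]
    apply Finset.sum_le_sum
    intro t ht
    exact aux_le_two_log (hupos t) (hbound t ht)
  have hlogeq : Real.log (lam + T / d) - Real.log lam = Real.log (1 + T / (d * lam)) := by
    rw [← Real.log_div (by positivity) (ne_of_gt hlam)]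
    congr 1
    field_simp
  calc ∑ t ∈ Finset.Icc 1 T, u t
      ≤ 2 * ∑ t ∈ Finset.Icc 1 T, Real.log (1 + u t) := hfinal
    _ ≤ 2 * (d * (Real.log (lam + T / d) - Real.log lam)) := by linarith [hsumlog]
    _ = 2 * d * Real.log (1 + T / (d * lam)) := by rw [hlogeq]; ring
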